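/- Let ν = ν(n) = √(2n+1) and define s_n = 2^{n+2} · n! · e^{n+1/2} / ( √π · ν^{2n+5/3} ). Then, as n → ∞, s_n − (2^{5/3}/n^{1/3})·( 1 − 5/(12ν²) − 23/(288ν⁴) ) = O( n^{−1/3} ν^{−6} ). -/

import Mathlib

set_option maxHeartbeats 1000000

open Real Filter Asymptotics

/-- `ν = √(2n+1)`, the classical turning point. -/
noncomputable def nu (n : ℕ) : ℝ := Real.sqrt (2 * n + 1)

/-- The prefactor `s_n = 2^{n+2} n! e^{n+1/2}/(√π ν^{2n+5/3})`, where
`ν^{2n+5/3} = (2n+1)^{n+5/6}`. -/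
noncomputable def prefactor (n : ℕ) : ℝ :=
  2 ^ (n + 2) * n.factorial * Real.exp ((n : ℝ) + 1 / 2) /
    (Real.sqrt π * (2 * (n : ℝ) + 1) ^ ((n : ℝ) + 5 / 6))

section Aux
open Finset Stirling

/-- upper bound on successive log-stirling differences -/
lemma d_le (m : ℕ) : Real.log (stirlingSeq (m + 1)) - Real.log (stirlingSeq (m + 2)) ≤
    1 / (12 * ((m : ℝ) + 1)) - 1 / (12 * ((m : ℝ) + 2)) := by
  set y : ℝ := ((1 : ℝ) / (2 * ((m : ℕ) + 1 : ℕ) + 1)) ^ 2 with hy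
  have hm : (0:ℝ) < 2 * ((m:ℝ) + 1) + 1 := by positivity
  have hy0 : 0 ≤ y := sq_nonneg _
  have hy1 : y < 1 := by
    rw [hy]
    have : (1:ℝ) / (2 * ((m : ℕ) + 1 : ℕ) + 1) < 1 := by
      rw [div_lt_one (by positivity)]
      push_cast; nlinarith [Nat.cast_nonneg (α := ℝ) m]
    have h0 : (0:ℝ) ≤ (1:ℝ) / (2 * ((m : ℕ) + 1 : ℕ) + 1) := by positivity
    nlinarith
  have g : HasSum (fun k : ℕ => (1/3 * y) * y ^ k) ((1/3 * y) / (1 - y)) :=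
    (hasSum_geometric_of_lt_one hy0 hy1).mul_left _
  have g' : HasSum (fun k : ℕ => (1:ℝ)/3 * y ^ (k+1)) ((1/3 * y) / (1 - y)) := by
    refine g.congr_fun fun k => by ring
  have hle := hasSum_le (fun k => ?_) (log_stirlingSeq_diff_hasSum m) g'
  · refine hle.trans_eq ?_
    rw [hy]
    push_cast
    have h1 : (2 * ((m:ℝ) + 1) + 1) ^ 2 - 1 ≠ 0 := by nlinarith [Nat.cast_nonneg (α := ℝ) m]
    field_simp
    ring
  · have : (1:ℝ) / (2 * ((k:ℕ) + 1 : ℕ) + 1) ≤ 1/3 := by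
      push_cast
      rw [div_le_div_iff₀ (by positivity) (by norm_num)]
      nlinarith [Nat.cast_nonneg (α := ℝ) k]
    calc (1:ℝ) / (2 * ((k:ℕ) + 1 : ℕ) + 1) * (y ^ (k+1)) ≤ 1/3 * y ^ (k+1) := by
          exact mul_le_mul_of_nonneg_right this (by positivity)
      _ = _ := rfl

/-- lower bound on successive log-stirling differences -/
lemma d_ge (m : ℕ) :
    (1 / (12 * ((m : ℝ) + 1)) - 1 / (360 * ((m : ℝ) + 1) ^ 3)) -
      (1 / (12 * ((m : ℝ) + 2)) - 1 / (360 * ((m : ℝ) + 2) ^ 3)) ≤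
    Real.log (stirlingSeq (m + 1)) - Real.log (stirlingSeq (m + 2)) := by
  set y : ℝ := ((1 : ℝ) / (2 * ((m : ℕ) + 1 : ℕ) + 1)) ^ 2 with hy
  have hs := log_stirlingSeq_diff_hasSum m
  have h2 : ∑ k ∈ Finset.range 2,
      (1 : ℝ) / (2 * ((k : ℕ) + 1 : ℕ) + 1) * y ^ ((k : ℕ) + 1) ≤
      Real.log (stirlingSeq (m + 1)) - Real.log (stirlingSeq (m + 2)) := by
    refine sum_le_hasSum _ (fun k _ => by positivity) hs
  have hsum : ∑ k ∈ Finset.range 2,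
      (1 : ℝ) / (2 * ((k : ℕ) + 1 : ℕ) + 1) * y ^ ((k : ℕ) + 1) = 1/3 * y + 1/5 * y^2 := by
    simp [Finset.sum_range_succ]
    norm_num
  rw [hsum] at h2
  refine le_trans ?_ h2
  -- rational inequality
  have ha : (1:ℝ) ≤ (m:ℝ) + 1 := by have := Nat.cast_nonneg (α := ℝ) m; linarith
  set a : ℝ := (m:ℝ) + 1 with hadef
  have ha0 : (0:ℝ) < a := by linarith
  have hy' : y = (1 / (2 * a + 1))^2 := by rw [hy, hadef]; push_cast; ring
  rw [hy']
  have h1 : (0:ℝ) < 2*a+1 := by linarith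
  have h2' : (0:ℝ) < a + 1 := by linarith
  have key : (0:ℝ) ≤ 10*a^4 + 20*a^3 + 21*a^2 + 11*a + 1 := by positivity
  have hm2 : (m:ℝ) + 2 = a + 1 := by rw [hadef]; ring
  rw [hm2]
  have expand : 1 / 3 * (1 / (2 * a + 1)) ^ 2 + 1 / 5 * ((1 / (2 * a + 1)) ^ 2) ^ 2 -
      (1 / (12 * a) - 1 / (360 * a ^ 3) - (1 / (12 * (a + 1)) - 1 / (360 * (a + 1) ^ 3))) =
      (10*a^4 + 20*a^3 + 21*a^2 + 11*a + 1) / (360 * a^3 * (a+1)^3 * (2*a+1)^4) := by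
    field_simp
    ring
  have hpos : (0:ℝ) ≤ (10*a^4 + 20*a^3 + 21*a^2 + 11*a + 1) / (360 * a^3 * (a+1)^3 * (2*a+1)^4) := by
    positivity
  linarith [expand, hpos]

lemma r_bounds (n : ℕ) :
    1 / (12 * ((n : ℝ) + 1)) - 1 / (360 * ((n : ℝ) + 1) ^ 3) ≤
      Real.log (stirlingSeq (n + 1)) - Real.log (Real.sqrt π) ∧
    Real.log (stirlingSeq (n + 1)) - Real.log (Real.sqrt π) ≤ 1 / (12 * ((n : ℝ) + 1)) := by
  set L : ℕ → ℝ := fun k => Real.log (stirlingSeq k) with hL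
  have hLlim : Tendsto L atTop (nhds (Real.log (Real.sqrt π))) := by
    have hpi : Real.sqrt π ≠ 0 := by positivity
    exact ((Real.continuousAt_log hpi).tendsto).comp tendsto_stirlingSeq_sqrt_pi
  -- partial sums telescope
  have hS : ∀ m : ℕ, ∑ k ∈ range m, (L (n + 1 + k) - L (n + 1 + (k+1))) = L (n+1) - L (n+1+m) :=
    fun m => Finset.sum_range_sub' (fun k => L (n + 1 + k)) m
  have htail : Tendsto (fun m => L (n + 1 + m)) atTop (nhds (Real.log (Real.sqrt π))) := by
    exact hLlim.comp (tendsto_atTop_mono (fun m => Nat.le_add_left m (n + 1)) tendsto_id :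
      Tendsto (fun m : ℕ => n + 1 + m) atTop atTop)
  have hSlim : Tendsto (fun m => ∑ k ∈ range m, (L (n + 1 + k) - L (n + 1 + (k+1)))) atTop
      (nhds (L (n+1) - Real.log (Real.sqrt π))) := by
    simp_rw [hS]
    exact tendsto_const_nhds.sub htail
  constructor
  · -- lower bound
    have hlow : ∀ m : ℕ,
        (1 / (12 * ((n:ℝ) + 1)) - 1 / (360 * ((n:ℝ) + 1) ^ 3)) -
          (1 / (12 * ((n:ℝ) + 1 + m)) - 1 / (360 * ((n:ℝ) + 1 + m) ^ 3)) ≤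
        ∑ k ∈ range m, (L (n + 1 + k) - L (n + 1 + (k+1))) := by
      intro m
      have htele : ∑ k ∈ range m,
          ((1 / (12 * ((n:ℝ) + 1 + k)) - 1 / (360 * ((n:ℝ) + 1 + k) ^ 3)) -
           (1 / (12 * ((n:ℝ) + 1 + (k+1))) - 1 / (360 * ((n:ℝ) + 1 + (k+1)) ^ 3))) =
          (1 / (12 * ((n:ℝ) + 1)) - 1 / (360 * ((n:ℝ) + 1) ^ 3)) -
          (1 / (12 * ((n:ℝ) + 1 + m)) - 1 / (360 * ((n:ℝ) + 1 + m) ^ 3)) := by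
        have := Finset.sum_range_sub'
          (fun k : ℕ => 1 / (12 * ((n:ℝ) + 1 + k)) - 1 / (360 * ((n:ℝ) + 1 + k) ^ 3)) m
        simpa using this
      rw [← htele]
      refine Finset.sum_le_sum fun k _ => ?_
      have := d_ge (n + k)
      have e1 : n + 1 + k = (n + k) + 1 := by omega
      have e2 : n + 1 + (k + 1) = (n + k) + 2 := by omega
      rw [e1, e2]
      convert this using 3 <;> push_cast <;> first | rfl | ring
    have hlhs : Tendsto (fun m : ℕ =>
        (1 / (12 * ((n:ℝ) + 1)) - 1 / (360 * ((n:ℝ) + 1) ^ 3)) -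
          (1 / (12 * ((n:ℝ) + 1 + m)) - 1 / (360 * ((n:ℝ) + 1 + m) ^ 3))) atTop
        (nhds (1 / (12 * ((n:ℝ) + 1)) - 1 / (360 * ((n:ℝ) + 1) ^ 3))) := by
      have h1 : Tendsto (fun m : ℕ => ((n:ℝ) + 1 + m)) atTop atTop :=
        tendsto_atTop_add_const_left _ _ tendsto_natCast_atTop_atTop
      have h2 : Tendsto (fun m : ℕ => 1 / (12 * ((n:ℝ) + 1 + m))) atTop (nhds 0) := by
        simp_rw [one_div]
        exact tendsto_inv_atTop_zero.comp (h1.const_mul_atTop (by norm_num : (0:ℝ) < 12))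
      have h3 : Tendsto (fun m : ℕ => 1 / (360 * ((n:ℝ) + 1 + m) ^ 3)) atTop (nhds 0) := by
        simp_rw [one_div]
        have hp : Tendsto (fun m : ℕ => ((n:ℝ) + 1 + m) ^ 3) atTop atTop :=
          (tendsto_pow_atTop (by norm_num : (3:ℕ) ≠ 0)).comp h1
        exact tendsto_inv_atTop_zero.comp (hp.const_mul_atTop (by norm_num : (0:ℝ) < 360))
      have := (h2.sub h3)
      simpa using tendsto_const_nhds.sub this
    exact le_of_tendsto_of_tendsto' hlhs hSlim hlow
  · -- upper bound
    refine le_of_tendsto hSlim (Filter.Eventually.of_forall fun m => ?_)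
    have hup : ∑ k ∈ range m, (L (n + 1 + k) - L (n + 1 + (k+1))) ≤
        1 / (12 * ((n:ℝ) + 1)) - 1 / (12 * ((n:ℝ) + 1 + m)) := by
      have htele : ∑ k ∈ range m,
          (1 / (12 * ((n:ℝ) + 1 + k)) - 1 / (12 * ((n:ℝ) + 1 + (k+1)))) =
          1 / (12 * ((n:ℝ) + 1)) - 1 / (12 * ((n:ℝ) + 1 + m)) := by
        have := Finset.sum_range_sub' (fun k : ℕ => 1 / (12 * ((n:ℝ) + 1 + k))) m
        simpa using this
      rw [← htele]
      refine Finset.sum_le_sum fun k _ => ?_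
      have := d_le (n + k)
      have e1 : n + 1 + k = (n + k) + 1 := by omega
      have e2 : n + 1 + (k + 1) = (n + k) + 2 := by omega
      rw [e1, e2]
      convert this using 3 <;> push_cast <;> first | rfl | ring
    refine hup.trans ?_
    have : (0:ℝ) ≤ 1 / (12 * ((n:ℝ) + 1 + m)) := by positivity
    linarith

lemma core (x r : ℝ) (hx : 1 ≤ x)
    (hr1 : 1/(12*x) - 1/(360*x^3) ≤ r) (hr2 : r ≤ 1/(12*x)) :
    |Real.exp (1/2 + r - (x + 5/6) * Real.log (1 + 1/(2*x))) -
      (1 - 5/(12*(2*x+1)) - 23/(288*(2*x+1)^2))| ≤ 5 / x^3 := by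
  have hx0 : (0:ℝ) < x := by linarith
  set y : ℝ := 1/(2*x) with hy
  have hy0 : 0 < y := by positivity
  have hy2 : y ≤ 1/2 := by
    rw [hy, div_le_div_iff₀ (by positivity) (by norm_num)]
    linarith
  -- log bound
  have hlog : |Real.log (1+y) - (y - y^2/2 + y^3/3 - y^4/4)| ≤ 2 * y^5 := by
    have h := Real.abs_log_sub_add_sum_range_le (x := -y)
      (by rw [abs_neg, abs_of_pos hy0]; linarith) 4
    have hsum : (∑ i ∈ range 4, (-y) ^ (i + 1) / (i + 1)) =
        -(y - y^2/2 + y^3/3 - y^4/4) := by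
      simp [Finset.sum_range_succ]
      ring
    rw [hsum, abs_neg, abs_of_pos hy0, sub_neg_eq_add] at h
    have h' : |Real.log (1+y) - (y - y^2/2 + y^3/3 - y^4/4)| ≤ y^5 / (1-y) := by
      calc |Real.log (1+y) - (y - y^2/2 + y^3/3 - y^4/4)|
          = |-(y - y^2/2 + y^3/3 - y^4/4) + Real.log (1+y)| := by congr 1; ring
        _ ≤ y ^ (4+1) / (1 - y) := h
        _ = y^5 / (1-y) := by norm_num
    refine h'.trans ?_
    rw [div_le_iff₀ (by linarith)]
    nlinarith [pow_pos hy0 5]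
  -- the polynomial approximation to the exponent
  set M : ℝ := -5/(24*x) + 1/(16*x^2) - 11/(576*x^3) + 5/(384*x^4) with hM
  set E : ℝ := 1/2 + r - (x + 5/6) * Real.log (1 + 1/(2*x)) with hE
  have hx2 : (0:ℝ) < x^2 := by positivity
  have hx3 : (0:ℝ) < x^3 := by positivity
  have hx4 : (0:ℝ) < x^4 := by positivity
  have hx5 : (0:ℝ) < x^5 := by positivity
  have hid : 1/2 + 1/(12*x) - (x+5/6)*(y - y^2/2 + y^3/3 - y^4/4) = M := by
    rw [hy, hM]; field_simp; ring
  have hEM : |E - M| ≤ 1/(2*x^3) := by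
    have hdiff : E - M = (r - 1/(12*x)) -
        (x+5/6)*(Real.log (1+y) - (y - y^2/2 + y^3/3 - y^4/4)) := by
      rw [← hid, hE, hy]; ring
    have habs1 : |r - 1/(12*x)| ≤ 1/(360*x^3) := by
      rw [abs_le]
      constructor
      · linarith
      · have : (0:ℝ) ≤ 1/(360*x^3) := by positivity
        linarith
    have habs2 : |(x+5/6)*(Real.log (1+y) - (y - y^2/2 + y^3/3 - y^4/4))| ≤ 1/(8*x^3) := by
      rw [abs_mul, abs_of_pos (by linarith : (0:ℝ) < x + 5/6)]
      have := mul_le_mul_of_nonneg_left hlog (by linarith : (0:ℝ) ≤ x + 5/6)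
      refine this.trans ?_
      have h5 : y^5 = 1/(32*x^5) := by rw [hy]; field_simp; ring
      rw [h5, show (x+5/6)*(2*(1/(32*x^5))) = (x+5/6)/(16*x^5) from by ring,
        div_le_div_iff₀ (by positivity) (by positivity)]
      nlinarith [pow_pos hx0 3, pow_pos hx0 4, pow_pos hx0 5]
    calc |E - M| ≤ |r - 1/(12*x)| + |(x+5/6)*(Real.log (1+y) - (y - y^2/2 + y^3/3 - y^4/4))| := by
          rw [hdiff]; exact abs_sub _ _
      _ ≤ 1/(360*x^3) + 1/(8*x^3) := add_le_add habs1 habs2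
      _ ≤ 1/(2*x^3) := by
          rw [show (1:ℝ)/(360*x^3) + 1/(8*x^3) = (23/180)/x^3 from by field_simp; ring,
            show (1:ℝ)/(2*x^3) = (1/2)/x^3 from by ring,
            div_le_div_iff_of_pos_right hx3]
          norm_num
  have hMabs : |M| ≤ 1/(3*x) := by
    have e1 : 1/(3*x) - M = (624*x^3-72*x^2+22*x-15)/(1152*x^4) := by
      rw [hM]; field_simp; ring
    have e2 : M + 1/(3*x) = (144*x^3+72*x^2-22*x+15)/(1152*x^4) := by
      rw [hM]; field_simp; ring
    have p1 : (0:ℝ) ≤ (624*x^3-72*x^2+22*x-15)/(1152*x^4) := by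
      apply div_nonneg _ (by positivity)
      nlinarith [pow_pos hx0 2, pow_pos hx0 3]
    have p2 : (0:ℝ) ≤ (144*x^3+72*x^2-22*x+15)/(1152*x^4) := by
      apply div_nonneg _ (by positivity)
      nlinarith [pow_pos hx0 2, pow_pos hx0 3]
    rw [abs_le]; constructor <;> linarith
  have hx3inv : 1/(2*x^3) ≤ 1/2 := by
    rw [div_le_div_iff₀ (by positivity) (by norm_num)]
    nlinarith
  have hx1inv : 1/(3*x) ≤ 1/3 := by
    rw [div_le_div_iff₀ (by positivity) (by norm_num)]
    linarith
  have hMabs1 : |M| ≤ 1 := hMabs.trans (by linarith)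
  have hEMabs1 : |E - M| ≤ 1 := hEM.trans (by linarith)
  have hMle1 : M ≤ 1 := (le_abs_self M).trans hMabs1
  -- step 1 : |exp E - exp M|
  have h1 : |Real.exp E - Real.exp M| ≤ 3/x^3 := by
    have hsplit : Real.exp E - Real.exp M = Real.exp M * (Real.exp (E - M) - 1) := by
      rw [mul_sub, mul_one, ← Real.exp_add]; ring_nf
    rw [hsplit, abs_mul, abs_of_pos (Real.exp_pos M)]
    have hb := Real.abs_exp_sub_one_le hEMabs1
    have hexpM : Real.exp M ≤ 3 := by
      calc Real.exp M ≤ Real.exp 1 := Real.exp_le_exp.mpr hMle1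
        _ ≤ 3 := by linarith [Real.exp_one_lt_d9]
    calc Real.exp M * |Real.exp (E - M) - 1| ≤ 3 * (2 * |E - M|) := by
          apply mul_le_mul hexpM hb (abs_nonneg _) (by norm_num)
      _ ≤ 3 * (2 * (1/(2*x^3))) := by
          have := hEM; nlinarith [abs_nonneg (E - M)]
      _ = 3/x^3 := by field_simp
  -- step 2 : |exp M - (1 + M + M^2/2)|
  have h2 : |Real.exp M - (1 + M + M^2/2)| ≤ 1/(2*x^3) := by
    have hb := Real.exp_bound hMabs1 (by norm_num : 0 < 3)
    have hsum : ∑ i ∈ range 3, M ^ i / (Nat.factorial i) = 1 + M + M^2/2 := by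
      simp [Finset.sum_range_succ, Nat.factorial]
      try ring
    rw [hsum] at hb
    refine hb.trans ?_
    have hM3 : |M|^3 ≤ (1/(3*x))^3 := by
      exact pow_le_pow_left₀ (abs_nonneg M) hMabs 3
    have : |M| ^ 3 * ((3:ℕ).succ / ((Nat.factorial 3 : ℕ) * (3:ℕ))) ≤ (1/(3*x))^3 * (4/18) := by
      apply mul_le_mul hM3 (by norm_num [Nat.factorial]) (by positivity) (by positivity)
    refine this.trans ?_
    rw [show ((1:ℝ)/(3*x))^3 * (4/18) = 2/(243*x^3) from by field_simp; ring,
      div_le_div_iff₀ (by positivity) (by positivity)]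
    nlinarith [pow_pos hx0 3]
  -- step 3 : polynomial comparison
  have h3 : |(1 + M + M^2/2) - (1 - 5/(12*(2*x+1)) - 23/(288*(2*x+1)^2))| ≤ 1/x^3 := by
    have h21 : (0:ℝ) < 2*x+1 := by linarith
    have e3 : (1 + M + M^2/2) - (1 - 5/(12*(2*x+1)) - 23/(288*(2*x+1)^2)) =
        (225 + 240*x + 904*x^2 - 2432*x^3 + 19408*x^4 + 74496*x^5 + 83712*x^6) /
          (2654208 * x^8 * (2*x+1)^2) := by
      rw [hM]; field_simp; ring
    rw [e3, abs_le]
    have ht : (0:ℝ) ≤ x - 1 := by linarith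
    have hD : (0:ℝ) < 2654208 * x^8 * (2*x+1)^2 := by positivity
    constructor
    · rw [neg_le, ← neg_div, div_le_div_iff₀ hD (by positivity)]
      linarith [pow_nonneg ht 2, pow_nonneg ht 3, pow_nonneg ht 4, pow_nonneg ht 5,
        pow_nonneg ht 6, pow_nonneg ht 7, pow_nonneg ht 8, pow_nonneg ht 9, pow_nonneg ht 10, ht]
    · rw [div_le_div_iff₀ hD (by positivity)]
      linarith [pow_nonneg ht 2, pow_nonneg ht 3, pow_nonneg ht 4, pow_nonneg ht 5,
        pow_nonneg ht 6, pow_nonneg ht 7, pow_nonneg ht 8, pow_nonneg ht 9, pow_nonneg ht 10, ht]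
  -- combine
  have hcomb : |Real.exp E - (1 - 5/(12*(2*x+1)) - 23/(288*(2*x+1)^2))| ≤ 5/x^3 := by
    calc |Real.exp E - (1 - 5/(12*(2*x+1)) - 23/(288*(2*x+1)^2))|
        ≤ |Real.exp E - Real.exp M| + |Real.exp M - (1 + M + M^2/2)| +
          |(1 + M + M^2/2) - (1 - 5/(12*(2*x+1)) - 23/(288*(2*x+1)^2))| := by
          have := abs_sub_le (Real.exp E) (Real.exp M) (1 - 5/(12*(2*x+1)) - 23/(288*(2*x+1)^2))
          have := abs_sub_le (Real.exp M) (1 + M + M^2/2)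
            (1 - 5/(12*(2*x+1)) - 23/(288*(2*x+1)^2))
          linarith
      _ ≤ 3/x^3 + 1/(2*x^3) + 1/x^3 := by linarith
      _ ≤ 5/x^3 := by
          rw [show (3:ℝ)/x^3 + 1/(2*x^3) + 1/x^3 = (9/2)/x^3 from by field_simp; ring,
            show (5:ℝ)/x^3 = 5/x^3 from rfl, div_le_div_iff_of_pos_right hx3]
          norm_num
  exact hcomb

lemma prefactor_eq (n : ℕ) (hn : 1 ≤ n) :
    prefactor n = 2 ^ ((5:ℝ)/3) / (n:ℝ) ^ ((1:ℝ)/3) *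
      Real.exp (1/2 + (Real.log (stirlingSeq n) - Real.log (Real.sqrt π)) -
        ((n:ℝ) + 5/6) * Real.log (1 + 1/(2*(n:ℝ)))) := by
  have hn0 : (0:ℝ) < n := by exact_mod_cast hn
  have hfac : (0:ℝ) < (n.factorial : ℝ) := by exact_mod_cast n.factorial_pos
  have hpi : (0:ℝ) < Real.sqrt π := by positivity
  have h2n1 : (0:ℝ) < 2*(n:ℝ)+1 := by positivity
  have hpre : 0 < prefactor n := by
    unfold prefactor
    positivity
  have hlogfac : Real.log (n.factorial : ℝ) = Real.log (stirlingSeq n) +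
      1/2 * Real.log (2*(n:ℝ)) + (n:ℝ) * (Real.log n - 1) := by
    have := log_stirlingSeq_formula n
    have hle : Real.log ((n:ℝ) / Real.exp 1) = Real.log n - 1 := by
      rw [Real.log_div (ne_of_gt hn0) (Real.exp_ne_zero 1), Real.log_exp]
    rw [hle] at this
    linarith
  have hlog2n1 : Real.log (2*(n:ℝ)+1) = Real.log 2 + Real.log n + Real.log (1 + 1/(2*(n:ℝ))) := by
    have he : 2*(n:ℝ)+1 = 2 * (n:ℝ) * (1 + 1/(2*(n:ℝ))) := by field_simp
    rw [he, Real.log_mul (by positivity) (by positivity),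
      Real.log_mul (by norm_num) (ne_of_gt hn0)]
  have hlogpre : Real.log (prefactor n) = (5/3) * Real.log 2 - (1/3) * Real.log n +
      (1/2 + (Real.log (stirlingSeq n) - Real.log (Real.sqrt π)) -
        ((n:ℝ) + 5/6) * Real.log (1 + 1/(2*(n:ℝ)))) := by
    unfold prefactor
    rw [Real.log_div (by positivity) (by positivity),
      Real.log_mul (by positivity) (Real.exp_ne_zero _),
      Real.log_mul (by positivity) hfac.ne',
      Real.log_mul hpi.ne' (by positivity),
      Real.log_pow, Real.log_exp, Real.log_rpow h2n1, hlogfac, hlog2n1,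
      Real.log_sqrt Real.pi_pos.le,
      Real.log_mul (by norm_num : (2:ℝ) ≠ 0) hn0.ne']
    push_cast
    ring
  have := Real.exp_log hpre
  rw [← this, hlogpre, Real.exp_add, Real.exp_sub,
    mul_comm ((5:ℝ)/3) (Real.log 2), mul_comm ((1:ℝ)/3) (Real.log (n:ℝ)),
    ← Real.rpow_def_of_pos (by norm_num : (0:ℝ) < 2),
    ← Real.rpow_def_of_pos hn0]

end Aux

open Finset Stirling in
theorem prefactor_expansion :
    (fun n : ℕ => prefactor n - (2 : ℝ) ^ ((5 : ℝ) / 3) / (n : ℝ) ^ ((1 : ℝ) / 3) *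
        (1 - 5 / (12 * nu n ^ 2) - 23 / (288 * nu n ^ 4)))
      =O[atTop] fun n : ℕ => (n : ℝ) ^ (-(1 : ℝ) / 3) * nu n ^ (-(6 : ℝ)) := by
  rw [isBigO_iff]
  refine ⟨540, ?_⟩
  filter_upwards [eventually_ge_atTop 1] with n hn
  have hn0 : (0:ℝ) < n := by exact_mod_cast hn
  have hx : (1:ℝ) ≤ (n:ℝ) := by exact_mod_cast hn
  set x : ℝ := (n:ℝ) with hxdef
  -- the remainder bounds
  obtain ⟨m, rfl⟩ : ∃ m, n = m + 1 := ⟨n - 1, by omega⟩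
  have hrb := r_bounds m
  have hcast : ((m:ℝ) + 1) = x := by rw [hxdef]; push_cast; ring
  rw [hcast] at hrb
  have hcore := core x (Real.log (stirlingSeq (m+1)) - Real.log (Real.sqrt π)) hx hrb.1 hrb.2
  -- nu facts
  have h2x1 : (0:ℝ) < 2*x+1 := by linarith
  have hnu2 : nu (m+1) ^ 2 = 2*x+1 := by
    rw [nu, Real.sq_sqrt (by positivity)]
  have hnu4 : nu (m+1) ^ 4 = (2*x+1)^2 := by
    rw [show (4:ℕ) = 2*2 from rfl, pow_mul, hnu2]
  have hnu6 : nu (m+1) ^ (-(6:ℝ)) = ((2*x+1)^3)⁻¹ := by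
    have h6 : nu (m+1) ^ (6:ℕ) = (2*x+1)^3 := by
      rw [show (6:ℕ) = 2*3 from rfl, pow_mul, hnu2]
    rw [show (-(6:ℝ)) = ((-6 : ℤ) : ℝ) by norm_num, Real.rpow_intCast, zpow_neg]
    norm_num
    exact_mod_cast h6
  -- rewrite prefactor
  rw [prefactor_eq (m+1) (by omega)]
  have hlog1 : (((m+1 : ℕ)):ℝ) = x := by rw [hxdef]
  rw [hlog1, hnu2, hnu4]
  -- norms
  have hrpow3 : (0:ℝ) < x ^ ((1:ℝ)/3) := Real.rpow_pos_of_pos hn0 _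
  have h2pow : (0:ℝ) < (2:ℝ) ^ ((5:ℝ)/3) := Real.rpow_pos_of_pos (by norm_num) _
  rw [Real.norm_eq_abs, Real.norm_eq_abs, ← mul_sub, abs_mul,
    abs_of_pos (by positivity : (0:ℝ) < 2 ^ ((5:ℝ)/3) / x ^ ((1:ℝ)/3))]
  have hB : |Real.exp (1/2 + (Real.log (stirlingSeq (m+1)) - Real.log (Real.sqrt π)) -
      (x + 5/6) * Real.log (1 + 1/(2*x))) - (1 - 5/(12*(2*x+1)) - 23/(288*(2*x+1)^2))| ≤
      5 / x^3 := hcore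
  -- RHS norm
  have hxneg : x ^ (-(1:ℝ)/3) = (x ^ ((1:ℝ)/3))⁻¹ := by
    rw [neg_div, Real.rpow_neg hn0.le]
  have hRHS : |x ^ (-(1:ℝ)/3) * nu (m+1) ^ (-(6:ℝ))| =
      (x ^ ((1:ℝ)/3))⁻¹ * ((2*x+1)^3)⁻¹ := by
    rw [hnu6, hxneg, abs_mul, abs_of_pos (by positivity), abs_of_pos (by positivity)]
  rw [hRHS]
  -- final estimate
  have h2le4 : (2:ℝ) ^ ((5:ℝ)/3) ≤ 4 := by
    have : (2:ℝ) ^ ((5:ℝ)/3) ≤ 2 ^ (2:ℝ) :=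
      Real.rpow_le_rpow_of_exponent_le (by norm_num) (by norm_num)
    have h4 : (2:ℝ) ^ (2:ℝ) = 4 := by
      rw [show (2:ℝ) = ((2:ℕ):ℝ) by norm_num, Real.rpow_natCast]; norm_num
    linarith
  have hx3 : 5 / x^3 ≤ 135 / (2*x+1)^3 := by
    rw [div_le_div_iff₀ (by positivity) (by positivity)]
    have hc : (2*x+1)^3 ≤ (3*x)^3 :=
      pow_le_pow_left₀ (by positivity) (by linarith) 3
    nlinarith [pow_pos hn0 3]
  have e1 : 2 ^ ((5:ℝ)/3) / x ^ ((1:ℝ)/3) ≤ 4 / x ^ ((1:ℝ)/3) := by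
    rw [div_le_div_iff_of_pos_right hrpow3]; exact h2le4
  calc 2 ^ ((5:ℝ)/3) / x ^ ((1:ℝ)/3) * |_ - _| ≤
      4 / x ^ ((1:ℝ)/3) * (135 / (2*x+1)^3) := by
        apply mul_le_mul e1 (hB.trans hx3) (abs_nonneg _) (by positivity)
    _ = 540 * ((x ^ ((1:ℝ)/3))⁻¹ * ((2*x+1)^3)⁻¹) := by
        rw [div_mul_div_comm, ← mul_inv, ← div_eq_mul_inv]
        norm_num
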